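/- Assume |1+β| > 1. Let r > 1 and θ ≥ 0 be real numbers. Let f : X → Y be a mapping satisfying, for all x, y, z ∈ X, the inequality ‖f(x+βy+αz) − f(x−αz) − βf(y) − 2f(αz)‖ ≤ ‖ρ₁(f(x+αz) − f(x) − f(αz))‖ + ‖ρ₂(f(x+βy−αz) − f(x) − βf(y) + f(αz))‖ + θ(‖x‖^r + ‖y‖^r + ‖z‖^r). Then there exists a unique additive mapping A : X → Y such that ‖f(x) − A(x)‖ ≤ (2θ/(|1+β|^r − |1+β|)) · (1/(1−|ρ₂|)) · ‖x‖^r for all x ∈ X. -/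

import Mathlib

open Filter Topology

theorem stmt_11 {X Y : Type*} [NormedAddCommGroup X] [NormedSpace ℂ X]
    [NormedAddCommGroup Y] [NormedSpace ℂ Y] [CompleteSpace Y]
    (α β : ℝ) (hα : α ≠ 0) (hβ : β ≠ 0) (hβ1 : 1 < |1 + β|) (ρ₁ ρ₂ : ℂ)
    (hρ2 : ‖ρ₂‖ < 1) (hρβ : ‖ρ₁‖ + ‖ρ₂‖ * |1 - β| < |β + 2|)
    (r θ : ℝ) (hr : 1 < r) (hθ : 0 ≤ θ)
    (f : X → Y)
    (hf : ∀ x y z : X,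
      ‖f (x + β • y + α • z) - f (x - α • z) - β • f y - 2 • f (α • z)‖ ≤
        ‖ρ₁ • (f (x + α • z) - f x - f (α • z))‖ +
        ‖ρ₂ • (f (x + β • y - α • z) - f x - β • f y + f (α • z))‖ +
        θ * (‖x‖ ^ r + ‖y‖ ^ r + ‖z‖ ^ r)) :
    ∃! A : X → Y, (∀ x y : X, A (x + y) = A x + A y) ∧
      ∀ x : X, ‖f x - A x‖ ≤
        (2 * θ / (|1 + β| ^ r - |1 + β|)) * (1 / (1 - ‖ρ₂‖)) * ‖x‖ ^ r := by
  have hρ2' : (0:ℝ) < 1 - ‖ρ₂‖ := by linarith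
  set L : ℝ := |1 + β| with hLdef
  have hL1 : 1 < L := hβ1
  have hL0 : (0:ℝ) < L := by linarith
  have hlam0 : (1 + β) ≠ 0 := fun h => by simp [hLdef, h] at hL1; linarith
  have hr0 : r ≠ 0 := by positivity
  set θ' : ℝ := θ / (1 - ‖ρ₂‖) with hθ'def
  have hθ'0 : 0 ≤ θ' := div_nonneg hθ hρ2'.le
  -- f 0 = 0
  have hf0 : f 0 = 0 := by
    have h := hf 0 0 0
    simp only [smul_zero, add_zero, sub_zero, zero_add, norm_zero, Real.zero_rpow hr0,
      mul_zero] at h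
    have e1 : f 0 - f 0 - β • f 0 - 2 • f 0 = -((β + 2) • f 0) := by
      simp only [add_smul, two_smul]; abel
    have e2 : f 0 - f 0 - β • f 0 + f 0 = (1 - β) • f 0 := by
      rw [sub_smul, one_smul]; abel
    have e3 : f 0 - f 0 - f 0 = -(f 0) := by abel
    rw [e1, e2, e3, norm_neg, smul_neg, norm_neg, norm_smul, norm_smul, norm_smul,
      norm_smul] at h
    simp only [Real.norm_eq_abs] at h
    have : ‖f 0‖ ≤ 0 := by nlinarith [norm_nonneg (f 0)]
    exact norm_le_zero_iff.mp this
  -- key inequality with z = 0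
  have key2 : ∀ x y : X, ‖f (x + β • y) - f x - β • f y‖ ≤ θ' * (‖x‖ ^ r + ‖y‖ ^ r) := by
    intro x y
    have h := hf x y 0
    simp only [smul_zero, add_zero, sub_zero, hf0, norm_zero, Real.zero_rpow hr0,
      sub_self, norm_smul] at h
    have : (1 - ‖ρ₂‖) * ‖f (x + β • y) - f x - β • f y‖ ≤ θ * (‖x‖ ^ r + ‖y‖ ^ r) := by
      nlinarith [norm_nonneg (f (x + β • y) - f x - β • f y)]
    rw [hθ'def, div_mul_eq_mul_div, le_div_iff₀ hρ2']
    linarith [this]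
  -- scaled inequality
  have key3 : ∀ x : X, ‖f ((1 + β) • x) - (1 + β) • f x‖ ≤ 2 * θ' * ‖x‖ ^ r := by
    intro x
    have h := key2 x x
    rw [show x + β • x = (1 + β) • x by module] at h
    rw [show f ((1+β) • x) - f x - β • f x = f ((1+β) • x) - (1+β) • f x by module] at h
    linarith [h]
  set c : ℝ := (1 + β)⁻¹ with hcdef
  have hcn : ∀ (n : ℕ) (x : X), ‖c ^ n • x‖ = L ^ (-(n:ℝ)) * ‖x‖ := by
    intro n x
    rw [norm_smul, Real.norm_eq_abs, abs_pow, abs_inv, ← hLdef,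
      Real.rpow_neg hL0.le, Real.rpow_natCast, inv_pow]
  set g : ℕ → X → Y := fun n x => ((1 + β) ^ n : ℝ) • f (c ^ n • x) with hgdef
  have hg0 : ∀ x, g 0 x = f x := by intro x; simp [hgdef]
  have hLpow : ∀ n : ℕ, |(1 + β) ^ n| = L ^ (n : ℝ) := by
    intro n; rw [abs_pow, ← hLdef, ← Real.rpow_natCast]
  have hcc : ∀ (n : ℕ) (x : X), (1 + β) • c ^ (n + 1) • x = c ^ n • x := by
    intro n x
    rw [smul_smul]; congr 1; rw [pow_succ, hcdef]; field_simp
  -- geometric step bound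
  have hstep : ∀ (x : X) (n : ℕ),
      dist (g n x) (g (n + 1) x) ≤ (2 * θ' * L ^ (-r) * ‖x‖ ^ r) * (L ^ (1 - r)) ^ n := by
    intro x n
    have e : g n x - g (n + 1) x
        = ((1 + β) ^ n : ℝ) • (f (c ^ n • x) - (1 + β) • f (c ^ (n + 1) • x)) := by
      rw [hgdef]
      simp only []
      rw [pow_succ]
      module
    have hkey := key3 (c ^ (n + 1) • x)
    rw [hcc n x] at hkey
    rw [dist_eq_norm, e, norm_smul, Real.norm_eq_abs, hLpow]
    calc L ^ (n:ℝ) * ‖f (c ^ n • x) - (1 + β) • f (c ^ (n + 1) • x)‖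
        ≤ L ^ (n:ℝ) * (2 * θ' * ‖c ^ (n+1) • x‖ ^ r) := by
          apply mul_le_mul_of_nonneg_left hkey (by positivity)
      _ = (2 * θ' * L ^ (-r) * ‖x‖ ^ r) * (L ^ (1 - r)) ^ n := by
          rw [hcn, Real.mul_rpow (by positivity) (norm_nonneg x),
            ← Real.rpow_natCast (L ^ (1-r)) n, ← Real.rpow_mul hL0.le,
            ← Real.rpow_mul hL0.le]
          push_cast
          have h1 : L ^ ((n:ℝ)) * L ^ (-((n:ℝ)+1)*r) = L ^ (-r) * L ^ ((1-r)*(n:ℝ)) := by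
            rw [← Real.rpow_add hL0, ← Real.rpow_add hL0]; congr 1; ring
          linear_combination (2 * θ' * ‖x‖ ^ r) * h1
  have hq0 : (0:ℝ) ≤ L ^ (1 - r) := Real.rpow_nonneg hL0.le _
  have hq1 : L ^ (1 - r) < 1 := Real.rpow_lt_one_of_one_lt_of_neg hL1 (by linarith)
  have hex : ∀ x : X, ∃ a : Y, Tendsto (fun n => g n x) atTop (𝓝 a) := fun x =>
    cauchySeq_tendsto_of_complete (cauchySeq_of_le_geometric _ _ hq1 (hstep x))
  set A : X → Y := fun x => (hex x).choose with hAdef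
  have hA : ∀ x, Tendsto (fun n => g n x) atTop (𝓝 (A x)) := fun x => (hex x).choose_spec
  have hLr : L < L ^ r := by
    nth_rewrite 1 [← Real.rpow_one L]
    exact Real.rpow_lt_rpow_of_exponent_lt hL1 (by linarith)
  have hLrpos : (0:ℝ) < L ^ r := Real.rpow_pos_of_pos hL0 r
  have hLrL : L ^ r * L ^ (1 - r) = L := by
    rw [← Real.rpow_add hL0, show r + (1 - r) = 1 by ring, Real.rpow_one]
  have hbound : ∀ x : X, ‖f x - A x‖ ≤
      (2 * θ / (L ^ r - L)) * (1 / (1 - ‖ρ₂‖)) * ‖x‖ ^ r := by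
    intro x
    have h := dist_le_of_le_geometric_of_tendsto₀ _ _ hq1 (hstep x) (hA x)
    rw [hg0, dist_eq_norm] at h
    refine h.trans (le_of_eq ?_)
    rw [hθ'def, Real.rpow_neg hL0.le]
    have hne1 : (1:ℝ) - L ^ (1-r) ≠ 0 := (by linarith : (0:ℝ) < 1 - L ^ (1-r)).ne'
    have hne2 : L ^ r - L ≠ 0 := (by linarith : (0:ℝ) < L ^ r - L).ne'
    have hne3 : (1:ℝ) - ‖ρ₂‖ ≠ 0 := hρ2'.ne'
    have key : ∀ u s xr : ℝ, u ≠ 0 → s ≠ 0 → u - L ≠ 0 → u * L ^ (1-r) = L →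
        2 * (θ / s) * u⁻¹ * xr / (1 - L ^ (1-r)) = 2 * θ / (u - L) * (1/s) * xr := by
      intro u s xr hu hs huL hrel
      rw [show (1:ℝ) - L ^ (1-r) = (u - L)/u from by
        rw [eq_div_iff hu, sub_mul, one_mul, mul_comm, hrel]]
      field_simp
    exact key (L ^ r) (1 - ‖ρ₂‖) (‖x‖ ^ r) hLrpos.ne' hne3 hne2 hLrL
  -- A is β-additive
  have habA : ∀ x y : X, A (x + β • y) = A x + β • A y := by
    intro x y
    have T1 : Tendsto (fun n => g n (x + β • y) - g n x - β • g n y) atTop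
        (𝓝 (A (x + β • y) - A x - β • A y)) :=
      ((hA (x + β • y)).sub (hA x)).sub ((hA y).const_smul β)
    have T2 : Tendsto (fun n => g n (x + β • y) - g n x - β • g n y) atTop (𝓝 0) := by
      rw [tendsto_zero_iff_norm_tendsto_zero]
      apply squeeze_zero (fun n => norm_nonneg _)
        (g := fun n => (θ' * (‖x‖ ^ r + ‖y‖ ^ r)) * (L ^ (1 - r)) ^ n)
      · intro n
        have e : g n (x + β • y) - g n x - β • g n y
            = ((1 + β) ^ n : ℝ) • (f (c ^ n • x + β • c ^ n • y) - f (c ^ n • x)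
                - β • f (c ^ n • y)) := by
          rw [hgdef]
          simp only []
          rw [show c ^ n • (x + β • y) = c ^ n • x + β • c ^ n • y from by
            rw [smul_add, smul_comm]]
          module
        rw [e, norm_smul, Real.norm_eq_abs, hLpow]
        calc L ^ (n:ℝ) * ‖f (c ^ n • x + β • c ^ n • y) - f (c ^ n • x) - β • f (c ^ n • y)‖
            ≤ L ^ (n:ℝ) * (θ' * (‖c ^ n • x‖ ^ r + ‖c ^ n • y‖ ^ r)) := by
              apply mul_le_mul_of_nonneg_left (key2 _ _) (by positivity)
          _ = (θ' * (‖x‖ ^ r + ‖y‖ ^ r)) * (L ^ (1 - r)) ^ n := by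
              rw [hcn, hcn, Real.mul_rpow (by positivity) (norm_nonneg x),
                Real.mul_rpow (by positivity) (norm_nonneg y),
                ← Real.rpow_natCast (L ^ (1-r)) n, ← Real.rpow_mul hL0.le,
                ← Real.rpow_mul hL0.le]
              have h1 : L ^ ((n:ℝ)) * L ^ (-(n:ℝ)*r) = L ^ ((1-r)*(n:ℝ)) := by
                rw [← Real.rpow_add hL0]; congr 1; ring
              linear_combination (θ' * (‖x‖ ^ r + ‖y‖ ^ r)) * h1
      · rw [show (0:ℝ) = (θ' * (‖x‖ ^ r + ‖y‖ ^ r)) * 0 from by ring]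
        exact (tendsto_pow_atTop_nhds_zero_of_lt_one hq0 hq1).const_mul _
    have h2 : A (x + β • y) - A x - β • A y = 0 := tendsto_nhds_unique T1 T2
    rw [sub_eq_zero] at h2
    rw [sub_eq_iff_eq_add] at h2
    rw [h2]; abel
  have hA0 : A 0 = 0 := by
    have h := habA 0 0
    simp only [smul_zero, add_zero] at h
    have h2 : β • A 0 = 0 := (left_eq_add.mp h)
    rcases smul_eq_zero.mp h2 with h3 | h3
    · exact absurd h3 hβ
    · exact h3
  have hAadd : ∀ x y : X, A (x + y) = A x + A y := by
    intro x u
    have h1 := habA x (β⁻¹ • u)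
    have h2 := habA 0 (β⁻¹ • u)
    rw [smul_inv_smul₀ hβ] at h1 h2
    rw [zero_add, hA0, zero_add] at h2
    rw [h1, ← h2]
  -- ℕ-homogeneity of additive maps
  have hnat : ∀ (B : X → Y), (∀ a b : X, B (a + b) = B a + B b) →
      ∀ (n : ℕ) (y : X), B (n • y) = n • B y := by
    intro B hB n y
    induction n with
    | zero =>
      have h0 : B 0 = 0 := left_eq_add.mp (by rw [← hB 0 0, add_zero])
      simp [h0]
    | succ k ih =>
      rw [succ_nsmul, succ_nsmul, hB, ih]
  refine ⟨A, ⟨hAadd, hbound⟩, ?_⟩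
  rintro A' ⟨hA'add, hA'bd⟩
  funext x
  set C : ℝ := (2 * θ / (L ^ r - L)) * (1 / (1 - ‖ρ₂‖)) with hCdef
  have hC0 : 0 ≤ C := by
    apply mul_nonneg (div_nonneg (by linarith) (by linarith))
    positivity
  have key : ∀ n : ℕ, 1 ≤ n → ‖A' x - A x‖ ≤ (2 * C * ‖x‖ ^ r) * (n:ℝ) ^ (1 - r) := by
    intro n hn
    have hnpos : (0:ℝ) < (n:ℝ) := by exact_mod_cast hn
    set y : X := ((n:ℝ)⁻¹) • x with hydef
    have hny : (n:ℕ) • y = x := by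
      rw [hydef, ← Nat.cast_smul_eq_nsmul ℝ, smul_smul, mul_inv_cancel₀ hnpos.ne',
        one_smul]
    have h1 : A' x = n • A' y := by rw [← hny, hnat A' hA'add]
    have h2 : A x = n • A y := by rw [← hny, hnat A hAadd]
    have hyn : ‖y‖ ^ r = (n:ℝ) ^ (-r) * ‖x‖ ^ r := by
      rw [hydef, norm_smul, Real.norm_eq_abs, abs_inv, Nat.abs_cast,
        Real.mul_rpow (by positivity) (norm_nonneg x), ← Real.rpow_neg_one,
        ← Real.rpow_mul (Nat.cast_nonneg n)]
      norm_num
    have hb1 : ‖f y - A' y‖ ≤ C * ‖y‖ ^ r := hA'bd y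
    have hb2 : ‖f y - A y‖ ≤ C * ‖y‖ ^ r := hbound y
    have e : A' x - A x = n • (A' y - A y) := by rw [h1, h2, smul_sub]
    rw [e, ← Nat.cast_smul_eq_nsmul ℝ, norm_smul, Real.norm_natCast]
    calc (n:ℝ) * ‖A' y - A y‖
        ≤ (n:ℝ) * (2 * C * ‖y‖ ^ r) := by
          apply mul_le_mul_of_nonneg_left _ hnpos.le
          calc ‖A' y - A y‖ ≤ ‖f y - A' y‖ + ‖f y - A y‖ := by
                have hns := norm_sub_le (f y - A y) (f y - A' y)
                rw [show (f y - A y) - (f y - A' y) = A' y - A y from by abel] at hns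
                linarith [hns]
            _ ≤ 2 * C * ‖y‖ ^ r := by linarith
      _ = (2 * C * ‖x‖ ^ r) * (n:ℝ) ^ (1 - r) := by
          rw [hyn]
          have h1' : (n:ℝ) * (n:ℝ) ^ (-r) = (n:ℝ) ^ (1 - r) := by
            nth_rewrite 1 [← Real.rpow_one (n:ℝ)]
            rw [← Real.rpow_add hnpos, show (1:ℝ) + -r = 1 - r from by ring]
          linear_combination (2 * C * ‖x‖ ^ r) * h1'
  have hlim : Tendsto (fun n : ℕ => (2 * C * ‖x‖ ^ r) * (n:ℝ) ^ (1 - r)) atTop (𝓝 0) := by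
    rw [show (0:ℝ) = (2 * C * ‖x‖ ^ r) * 0 from by ring]
    apply Tendsto.const_mul
    have h := (tendsto_rpow_neg_atTop (show (0:ℝ) < r - 1 by linarith)).comp
      (tendsto_natCast_atTop_atTop (R := ℝ))
    simpa [Function.comp_def, show -(r-1) = 1 - r from by ring] using h
  have hle : ‖A' x - A x‖ ≤ 0 :=
    ge_of_tendsto hlim (eventually_atTop.mpr ⟨1, fun n hn => key n hn⟩)
  have := norm_le_zero_iff.mp hle
  rw [sub_eq_zero] at this
  exact this
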